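/- For discrete random variables G, Y, Z, the mutual information I(G;Z) equals H(G) - L_CE + D_KL(p_{YZ}‖p_Y p_Z) + D_KL(p_Y‖p_Z) + H(Y|G,Z) - H(G|Y,Z), where L_CE = H(p_Y, p_Z) is the cross-entropy of p_Y relative to p_Z. In particular, holding the other five terms fixed, I(G;Z) is strictly decreasing in L_CE. -/
import Mathlib


open Finset

lemma mul_log_div_aux (a b : ℝ) (h : a ≠ 0 → b ≠ 0) :
    a * Real.log (a / b) = a * Real.log a - a * Real.log b := by
  by_cases ha : a = 0
  · simp [ha]
  · rw [Real.log_div ha (h ha)]; ring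

lemma mul_log_div_mul_aux (a b c : ℝ) (hb : a ≠ 0 → b ≠ 0) (hc : a ≠ 0 → c ≠ 0) :
    a * Real.log (a / (b * c)) = a * Real.log a - a * Real.log b - a * Real.log c := by
  by_cases ha : a = 0
  · simp [ha]
  · rw [Real.log_div ha (mul_ne_zero (hb ha) (hc ha)), Real.log_mul (hb ha) (hc ha)]; ring

/-- I(G;Z) = H(G) - L_CE + D_KL(p_{YZ}‖p_Y p_Z) + D_KL(p_Y‖p_Z) + H(Y|G,Z) - H(G|Y,Z),
where Y and Z share a common finite alphabet; moreover, holding the other five terms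
fixed, the right-hand side is strictly decreasing in L_CE. -/
theorem mutualInfo_crossEntropy_identity {γ α : Type*} [Fintype γ] [Fintype α]
    (p : γ × α × α → ℝ)
    (h0 : ∀ x, 0 ≤ p x) (h1 : ∑ x, p x = 1)
    (pG : γ → ℝ) (hpG : ∀ g, pG g = ∑ y, ∑ z, p (g, y, z))
    (pY : α → ℝ) (hpY : ∀ y, pY y = ∑ g, ∑ z, p (g, y, z))
    (pZ : α → ℝ) (hpZ : ∀ z, pZ z = ∑ g, ∑ y, p (g, y, z))
    (pGZ : γ → α → ℝ) (hpGZ : ∀ g z, pGZ g z = ∑ y, p (g, y, z))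
    (pYZ : α → α → ℝ) (hpYZ : ∀ y z, pYZ y z = ∑ g, p (g, y, z))
    (hsupp : ∀ y, 0 < pY y → 0 < pZ y)
    (LCE : ℝ) (hLCE : LCE = -∑ y, pY y * Real.log (pZ y)) :
    ((-∑ g, pG g * Real.log (pG g))
        - (-∑ g, ∑ z, pGZ g z * Real.log (pGZ g z / pZ z))
      = (-∑ g, pG g * Real.log (pG g)) - LCE
        + (∑ y, ∑ z, pYZ y z * Real.log (pYZ y z / (pY y * pZ z)))
        + (∑ y, pY y * Real.log (pY y / pZ y))
        + (-∑ g, ∑ y, ∑ z, p (g, y, z) * Real.log (p (g, y, z) / pGZ g z))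
        - (-∑ g, ∑ y, ∑ z, p (g, y, z) * Real.log (p (g, y, z) / pYZ y z)))
    ∧ (∀ L₁ L₂ : ℝ, L₁ < L₂ →
        (-∑ g, pG g * Real.log (pG g)) - L₂
          + (∑ y, ∑ z, pYZ y z * Real.log (pYZ y z / (pY y * pZ z)))
          + (∑ y, pY y * Real.log (pY y / pZ y))
          + (-∑ g, ∑ y, ∑ z, p (g, y, z) * Real.log (p (g, y, z) / pGZ g z))
          - (-∑ g, ∑ y, ∑ z, p (g, y, z) * Real.log (p (g, y, z) / pYZ y z))
        < (-∑ g, pG g * Real.log (pG g)) - L₁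
          + (∑ y, ∑ z, pYZ y z * Real.log (pYZ y z / (pY y * pZ z)))
          + (∑ y, pY y * Real.log (pY y / pZ y))
          + (-∑ g, ∑ y, ∑ z, p (g, y, z) * Real.log (p (g, y, z) / pGZ g z))
          - (-∑ g, ∑ y, ∑ z, p (g, y, z) * Real.log (p (g, y, z) / pYZ y z))) := by
  constructor
  · -- nonnegativity of marginals
    have hpGZ0 : ∀ g z, 0 ≤ pGZ g z := fun g z => by
      rw [hpGZ]; exact Finset.sum_nonneg fun _ _ => h0 _
    have hpYZ0 : ∀ y z, 0 ≤ pYZ y z := fun y z => by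
      rw [hpYZ]; exact Finset.sum_nonneg fun _ _ => h0 _
    have hpY0 : ∀ y, 0 ≤ pY y := fun y => by
      rw [hpY]; exact Finset.sum_nonneg fun _ _ => Finset.sum_nonneg fun _ _ => h0 _
    have hpZ0 : ∀ z, 0 ≤ pZ z := fun z => by
      rw [hpZ]; exact Finset.sum_nonneg fun _ _ => Finset.sum_nonneg fun _ _ => h0 _
    -- marginal identities
    have hZg : ∀ z, ∑ g, pGZ g z = pZ z := fun z => by
      rw [hpZ]; exact Finset.sum_congr rfl fun g _ => (hpGZ g z)
    have hZy : ∀ z, ∑ y, pYZ y z = pZ z := fun z => by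
      rw [hpZ]; rw [Finset.sum_comm]; exact Finset.sum_congr rfl fun y _ => (hpYZ y z)
    have hYz : ∀ y, ∑ z, pYZ y z = pY y := fun y => by
      rw [hpY]; rw [Finset.sum_comm]; exact Finset.sum_congr rfl fun z _ => (hpYZ y z)
    -- support/domination facts
    have hle_pGZ : ∀ g y z, p (g, y, z) ≤ pGZ g z := fun g y z => by
      rw [hpGZ]
      exact Finset.single_le_sum (fun i _ => h0 (g, i, z)) (Finset.mem_univ y)
    have hle_pYZ : ∀ g y z, p (g, y, z) ≤ pYZ y z := fun g y z => by
      rw [hpYZ]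
      exact Finset.single_le_sum (fun i _ => h0 (i, y, z)) (Finset.mem_univ g)
    have hGZ_le_Z : ∀ g z, pGZ g z ≤ pZ z := fun g z => by
      rw [← hZg z]
      exact Finset.single_le_sum (fun i _ => hpGZ0 i z) (Finset.mem_univ g)
    have hYZ_le_Z : ∀ y z, pYZ y z ≤ pZ z := fun y z => by
      rw [← hZy z]
      exact Finset.single_le_sum (fun i _ => hpYZ0 i z) (Finset.mem_univ y)
    have hYZ_le_Y : ∀ y z, pYZ y z ≤ pY y := fun y z => by
      rw [← hYz y]
      exact Finset.single_le_sum (fun i _ => hpYZ0 y i) (Finset.mem_univ z)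
    -- rewrite each divergence-style sum
    have hA : ∑ g, ∑ z, pGZ g z * Real.log (pGZ g z / pZ z)
        = (∑ g, ∑ z, pGZ g z * Real.log (pGZ g z)) - ∑ z, pZ z * Real.log (pZ z) := by
      have : ∑ g, ∑ z, pGZ g z * Real.log (pGZ g z / pZ z)
          = ∑ g, ∑ z, (pGZ g z * Real.log (pGZ g z) - pGZ g z * Real.log (pZ z)) := by
        refine Finset.sum_congr rfl fun g _ => Finset.sum_congr rfl fun z _ => ?_
        exact mul_log_div_aux _ _ (fun h => by
          intro hz; exact h (le_antisymm (hz ▸ hGZ_le_Z g z) (hpGZ0 g z)))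
      rw [this]
      simp only [Finset.sum_sub_distrib]
      congr 1
      rw [Finset.sum_comm]
      refine Finset.sum_congr rfl fun z _ => ?_
      rw [← Finset.sum_mul, hZg]
    have hB : ∑ y, ∑ z, pYZ y z * Real.log (pYZ y z / (pY y * pZ z))
        = (∑ y, ∑ z, pYZ y z * Real.log (pYZ y z))
          - (∑ y, pY y * Real.log (pY y)) - ∑ z, pZ z * Real.log (pZ z) := by
      have : ∑ y, ∑ z, pYZ y z * Real.log (pYZ y z / (pY y * pZ z))
          = ∑ y, ∑ z, (pYZ y z * Real.log (pYZ y z)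
              - pYZ y z * Real.log (pY y) - pYZ y z * Real.log (pZ z)) := by
        refine Finset.sum_congr rfl fun y _ => Finset.sum_congr rfl fun z _ => ?_
        refine mul_log_div_mul_aux _ _ _ ?_ ?_
        · intro h hy; exact h (le_antisymm (hy ▸ hYZ_le_Y y z) (hpYZ0 y z))
        · intro h hz; exact h (le_antisymm (hz ▸ hYZ_le_Z y z) (hpYZ0 y z))
      rw [this]
      simp only [Finset.sum_sub_distrib]
      congr 1
      · congr 1
        refine Finset.sum_congr rfl fun y _ => ?_
        rw [← Finset.sum_mul, hYz]
      · rw [Finset.sum_comm]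
        refine Finset.sum_congr rfl fun z _ => ?_
        rw [← Finset.sum_mul, hZy]
    have hC : ∑ y, pY y * Real.log (pY y / pZ y)
        = (∑ y, pY y * Real.log (pY y)) - ∑ y, pY y * Real.log (pZ y) := by
      rw [← Finset.sum_sub_distrib]
      refine Finset.sum_congr rfl fun y _ => ?_
      refine mul_log_div_aux _ _ fun h hz => ?_
      exact h (le_antisymm (le_of_not_gt fun hy => (hz ▸ hsupp y hy).false)
        (hpY0 y))
    have hD : ∑ g, ∑ y, ∑ z, p (g, y, z) * Real.log (p (g, y, z) / pGZ g z)
        = (∑ g, ∑ y, ∑ z, p (g, y, z) * Real.log (p (g, y, z)))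
          - ∑ g, ∑ z, pGZ g z * Real.log (pGZ g z) := by
      have : ∑ g, ∑ y, ∑ z, p (g, y, z) * Real.log (p (g, y, z) / pGZ g z)
          = ∑ g, ∑ y, ∑ z, (p (g, y, z) * Real.log (p (g, y, z))
              - p (g, y, z) * Real.log (pGZ g z)) := by
        refine Finset.sum_congr rfl fun g _ => Finset.sum_congr rfl fun y _ =>
          Finset.sum_congr rfl fun z _ => ?_
        refine mul_log_div_aux _ _ fun h hgz => ?_
        exact h (le_antisymm (hgz ▸ hle_pGZ g y z) (h0 _))
      rw [this]
      simp only [Finset.sum_sub_distrib]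
      congr 1
      refine Finset.sum_congr rfl fun g _ => ?_
      rw [Finset.sum_comm]
      refine Finset.sum_congr rfl fun z _ => ?_
      rw [← Finset.sum_mul, ← hpGZ]
    have hE : ∑ g, ∑ y, ∑ z, p (g, y, z) * Real.log (p (g, y, z) / pYZ y z)
        = (∑ g, ∑ y, ∑ z, p (g, y, z) * Real.log (p (g, y, z)))
          - ∑ y, ∑ z, pYZ y z * Real.log (pYZ y z) := by
      have : ∑ g, ∑ y, ∑ z, p (g, y, z) * Real.log (p (g, y, z) / pYZ y z)
          = ∑ g, ∑ y, ∑ z, (p (g, y, z) * Real.log (p (g, y, z))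
              - p (g, y, z) * Real.log (pYZ y z)) := by
        refine Finset.sum_congr rfl fun g _ => Finset.sum_congr rfl fun y _ =>
          Finset.sum_congr rfl fun z _ => ?_
        refine mul_log_div_aux _ _ fun h hyz => ?_
        exact h (le_antisymm (hyz ▸ hle_pYZ g y z) (h0 _))
      rw [this]
      simp only [Finset.sum_sub_distrib]
      congr 1
      rw [Finset.sum_comm]
      refine Finset.sum_congr rfl fun y _ => ?_
      rw [Finset.sum_comm]
      refine Finset.sum_congr rfl fun z _ => ?_
      rw [← Finset.sum_mul, ← hpYZ]
    rw [hA, hB, hC, hD, hE, hLCE]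
    ring
  · intro L₁ L₂ h
    linarith
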